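/- For any Hermiticity-preserving, trace-annihilating linear map Φ on L(ℂ^d) (e.g. Φ = id − T for a channel T) and any density operator ρ on ℂ^d ⊗ ℂ^k, one has ‖(Θ∘Φ ⊗ id)(ρ)‖₁ ≤ d·‖(Φ ⊗ id)(ρ)‖₂ ≤ (d/√2)·‖(Φ ⊗ id)(ρ)‖₁. -/

import Mathlib

open Matrix Kronecker BigOperators
open scoped ComplexOrder

noncomputable def traceNorm {n : Type*} [Fintype n] [DecidableEq n] (X : Matrix n n ℂ) : ℝ :=
  (((Matrix.posSemidef_conjTranspose_mul_self X).1.eigenvectorUnitary.1 *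
      diagonal (((↑) : ℝ → ℂ) ∘ (√·) ∘ (Matrix.posSemidef_conjTranspose_mul_self X).1.eigenvalues) *
      (star (Matrix.posSemidef_conjTranspose_mul_self X).1.eigenvectorUnitary :
        Matrix n n ℂ)).trace).re

noncomputable def hsNorm {n : Type*} [Fintype n] (X : Matrix n n ℂ) : ℝ :=
  Real.sqrt ((Xᴴ * X).trace.re)

noncomputable def singularValues {n : Type*} [Fintype n] [DecidableEq n] (Y : Matrix n n ℂ) :
    n → ℝ :=
  fun i => Real.sqrt ((Matrix.posSemidef_conjTranspose_mul_self Y).1.eigenvalues i)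

/-- Partial transpose on the first tensor factor. -/
def ptransp {d k : ℕ} (X : Matrix (Fin d × Fin k) (Fin d × Fin k) ℂ) :
    Matrix (Fin d × Fin k) (Fin d × Fin k) ℂ :=
  fun p q => X (q.1, p.2) (p.1, q.2)

/-- Partial trace over the first tensor factor. -/
noncomputable def ptraceH {d k : ℕ} (X : Matrix (Fin d × Fin k) (Fin d × Fin k) ℂ) :
    Matrix (Fin k) (Fin k) ℂ :=
  fun j j' => ∑ i, X (i, j) (i, j')

def vec {d : ℕ} (A : Matrix (Fin d) (Fin d) ℂ) : Fin d × Fin d → ℂ := fun p => A p.1 p.2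

/-- Outer product |v⟩⟨w|. -/
def outer {n : Type*} (v w : n → ℂ) : Matrix n n ℂ := fun i j => v i * star (w j)

/-- The swap operator F(e_i ⊗ e_j) = e_j ⊗ e_i. -/
def swapOp (d : ℕ) : Matrix (Fin d × Fin d) (Fin d × Fin d) ℂ :=
  fun p q => if p.1 = q.2 ∧ p.2 = q.1 then 1 else 0

/-- Blockwise action of Φ ⊗ id on operators on H ⊗ K. -/
def tensorExt {d k : ℕ} (Φ : Matrix (Fin d) (Fin d) ℂ → Matrix (Fin d) (Fin d) ℂ)
    (Z : Matrix (Fin d × Fin k) (Fin d × Fin k) ℂ) :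
    Matrix (Fin d × Fin k) (Fin d × Fin k) ℂ :=
  fun p q => Φ (fun a b => Z (a, p.2) (b, q.2)) p.1 q.1

/-- Diamond norm (stabilized at ancilla dimension d). -/
noncomputable def diamondNorm {d : ℕ}
    (Φ : Matrix (Fin d) (Fin d) ℂ → Matrix (Fin d) (Fin d) ℂ) : ℝ :=
  ⨆ ρ : {ρ : Matrix (Fin d × Fin d) (Fin d × Fin d) ℂ // ρ.PosSemidef ∧ ρ.trace = 1},
    traceNorm (tensorExt Φ ρ.1)

section Aux

variable {n : Type*} [Fintype n] [DecidableEq n]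

lemma aux_trace_conj_unitary (U : Matrix.unitaryGroup n ℂ) (B : Matrix n n ℂ) :
    (U.1 * B * (star U.1 : Matrix n n ℂ)).trace = B.trace := by
  rw [Matrix.trace_mul_cycle, Matrix.UnitaryGroup.star_mul_self, one_mul]

lemma aux_trace_eq_sum_eigenvalues {A : Matrix n n ℂ} (hA : A.IsHermitian) :
    A.trace = ∑ i, (hA.eigenvalues i : ℂ) := by
  conv_lhs => rw [hA.spectral_theorem, Unitary.conjStarAlgAut_apply]
  rw [aux_trace_conj_unitary hA.eigenvectorUnitary, Matrix.trace_diagonal]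
  rfl

lemma aux_traceNorm_eq_sum (X : Matrix n n ℂ) :
    traceNorm X = ∑ i,
      Real.sqrt ((Matrix.posSemidef_conjTranspose_mul_self X).1.eigenvalues i) := by
  unfold traceNorm
  rw [aux_trace_conj_unitary, Matrix.trace_diagonal]
  rw [Complex.re_sum]
  rfl

lemma aux_hsNorm_sq_eq_sum (X : Matrix n n ℂ) :
    (Xᴴ * X).trace.re = ∑ i,
      (Matrix.posSemidef_conjTranspose_mul_self X).1.eigenvalues i := by
  rw [aux_trace_eq_sum_eigenvalues (Matrix.posSemidef_conjTranspose_mul_self X).1]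
  rw [Complex.re_sum]
  simp

omit [DecidableEq n] in
lemma aux_hsNorm_nonneg (X : Matrix n n ℂ) : 0 ≤ hsNorm X := Real.sqrt_nonneg _

lemma aux_traceNorm_le_sqrt_card (X : Matrix n n ℂ) :
    traceNorm X ≤ Real.sqrt (Fintype.card n) * hsNorm X := by
  rw [aux_traceNorm_eq_sum]
  have h1 : (∑ i, Real.sqrt ((Matrix.posSemidef_conjTranspose_mul_self X).1.eigenvalues i)) ^ 2
      ≤ (Fintype.card n) * ∑ i,
        (Matrix.posSemidef_conjTranspose_mul_self X).1.eigenvalues i := by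
    calc _ ≤ (Finset.univ.card : ℝ) * ∑ i,
          Real.sqrt ((Matrix.posSemidef_conjTranspose_mul_self X).1.eigenvalues i) ^ 2 :=
        sq_sum_le_card_mul_sum_sq
      _ = (Fintype.card n) * ∑ i,
          (Matrix.posSemidef_conjTranspose_mul_self X).1.eigenvalues i := by
        rw [Finset.card_univ]
        congr 1
        exact Finset.sum_congr rfl fun i _ => Real.sq_sqrt
          ((Matrix.posSemidef_conjTranspose_mul_self X).eigenvalues_nonneg i)
  have h2 : 0 ≤ ∑ i, Real.sqrt ((Matrix.posSemidef_conjTranspose_mul_self X).1.eigenvalues i) :=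
    Finset.sum_nonneg fun i _ => Real.sqrt_nonneg _
  calc ∑ i, Real.sqrt ((Matrix.posSemidef_conjTranspose_mul_self X).1.eigenvalues i)
      = Real.sqrt ((∑ i, Real.sqrt
          ((Matrix.posSemidef_conjTranspose_mul_self X).1.eigenvalues i)) ^ 2) :=
        (Real.sqrt_sq h2).symm
    _ ≤ Real.sqrt ((Fintype.card n) * ∑ i,
          (Matrix.posSemidef_conjTranspose_mul_self X).1.eigenvalues i) := Real.sqrt_le_sqrt h1
    _ = Real.sqrt (Fintype.card n) * hsNorm X := by
        rw [Real.sqrt_mul (by positivity), hsNorm, aux_hsNorm_sq_eq_sum]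

lemma aux_conj_mul_conj (U : Matrix.unitaryGroup n ℂ) (f g : n → ℂ) :
    (U.1 * Matrix.diagonal f * star U.1) * (U.1 * Matrix.diagonal g * star U.1) =
      U.1 * Matrix.diagonal (fun i => f i * g i) * star U.1 := by
  have h : (star U.1 : Matrix n n ℂ) * U.1 = 1 := Matrix.UnitaryGroup.star_mul_self U
  calc (U.1 * Matrix.diagonal f * star U.1) * (U.1 * Matrix.diagonal g * star U.1)
      = U.1 * Matrix.diagonal f * ((star U.1 * U.1) * (Matrix.diagonal g * star U.1)) := by
        noncomm_ring
    _ = U.1 * (Matrix.diagonal f * Matrix.diagonal g) * star U.1 := by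
        rw [h, one_mul]; noncomm_ring
    _ = U.1 * Matrix.diagonal (fun i => f i * g i) * star U.1 := by
        rw [Matrix.diagonal_mul_diagonal]

lemma aux_hermitian_conj_mul_self {Y : Matrix n n ℂ} (hY : Y.IsHermitian) :
    Yᴴ * Y = hY.eigenvectorUnitary.1 *
      Matrix.diagonal (fun i => ((hY.eigenvalues i : ℂ))^2) * star hY.eigenvectorUnitary.1 := by
  conv_lhs => rw [hY.eq, hY.spectral_theorem, Unitary.conjStarAlgAut_apply]
  rw [aux_conj_mul_conj]
  congr 2
  funext i
  simp [Function.comp, sq]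

lemma aux_hermitian_hs_sq {Y : Matrix n n ℂ} (hY : Y.IsHermitian) :
    (Yᴴ * Y).trace.re = ∑ i, (hY.eigenvalues i)^2 := by
  rw [aux_hermitian_conj_mul_self hY, aux_trace_conj_unitary, Matrix.trace_diagonal,
    Complex.re_sum]
  simp [← Complex.ofReal_pow]

lemma aux_hermitian_traceNorm {Y : Matrix n n ℂ} (hY : Y.IsHermitian) :
    traceNorm Y = ∑ i, |hY.eigenvalues i| := by
  set U := hY.eigenvectorUnitary
  set B : Matrix n n ℂ := U.1 * Matrix.diagonal (fun i => Complex.ofReal |hY.eigenvalues i|)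
      * star U.1 with hBdef
  have hBpsd : B.PosSemidef := by
    rw [Matrix.star_eq_conjTranspose] at hBdef
    rw [hBdef]
    exact Matrix.PosSemidef.mul_mul_conjTranspose_same
      (Matrix.posSemidef_diagonal_iff.mpr fun i => by
        rw [RCLike.nonneg_iff]
        constructor
        · simpa using abs_nonneg (hY.eigenvalues i)
        · simp) _
  have hBsq : B ^ 2 = Yᴴ * Y := by
    rw [sq, hBdef, aux_conj_mul_conj, aux_hermitian_conj_mul_self hY]
    have habs : (fun i => Complex.ofReal |hY.eigenvalues i| * Complex.ofReal |hY.eigenvalues i|)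
        = fun i => ((hY.eigenvalues i : ℂ))^2 := by
      funext i
      norm_cast
      rw [← sq, sq_abs]
    rw [habs]
  have hsqrt : B = (Matrix.posSemidef_conjTranspose_mul_self Y).1.eigenvectorUnitary.1 *
      diagonal (((↑) : ℝ → ℂ) ∘ (√·) ∘ (Matrix.posSemidef_conjTranspose_mul_self Y).1.eigenvalues) *
      (star (Matrix.posSemidef_conjTranspose_mul_self Y).1.eigenvectorUnitary :
        Matrix n n ℂ) := by
    have hYsa : IsSelfAdjoint Y := hY
    have e1 : cfc (fun x : ℝ => |x|) Y = B := by
      rw [Matrix.IsHermitian.cfc_eq hY, hBdef]; rfl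
    have e2 := Matrix.IsHermitian.cfc_eq (Matrix.posSemidef_conjTranspose_mul_self Y).1 Real.sqrt
    have e3 : Y * Y = cfc (fun x : ℝ => x * x) Y := by
      rw [cfc_mul (fun x : ℝ => x) (fun x : ℝ => x) Y, cfc_id' (R := ℝ) (a := Y)]
    rw [← e1]
    refine (?_ : _ = cfc Real.sqrt (Yᴴ * Y)).trans (e2.trans rfl)
    rw [hY.eq, e3, ← cfc_comp Real.sqrt (fun x : ℝ => x * x) Y (ha := hYsa)]
    exact cfc_congr (fun x _ => by simp [Real.sqrt_mul_self_eq_abs])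
  unfold traceNorm
  rw [← hsqrt, hBdef, aux_trace_conj_unitary, Matrix.trace_diagonal, Complex.re_sum]
  simp

lemma aux_hermitian_sum_eigenvalues_eq_zero {Y : Matrix n n ℂ} (hY : Y.IsHermitian)
    (h : Y.trace = 0) : ∑ i, hY.eigenvalues i = 0 := by
  have h1 := aux_trace_eq_sum_eigenvalues hY
  rw [h] at h1
  have h2 : ((∑ i, hY.eigenvalues i : ℝ) : ℂ) = 0 := by push_cast; rw [← h1]
  exact_mod_cast h2

omit [DecidableEq n] in
lemma aux_hs_sq_entrywise (X : Matrix n n ℂ) :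
    (Xᴴ * X).trace.re = ∑ p, ∑ q, Complex.normSq (X p q) := by
  rw [Matrix.trace]
  simp only [Matrix.diag_apply, Matrix.mul_apply, Matrix.conjTranspose_apply]
  rw [Complex.re_sum, Finset.sum_comm]
  refine Finset.sum_congr rfl fun p _ => ?_
  rw [Complex.re_sum]
  refine Finset.sum_congr rfl fun q _ => ?_
  rw [Complex.star_def, ← Complex.normSq_eq_conj_mul_self, Complex.ofReal_re]

lemma aux_sum_sq_le_half (f : n → ℝ) (h0 : ∑ i, f i = 0) :
    2 * ∑ i, f i ^ 2 ≤ (∑ i, |f i|) ^ 2 := by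
  classical
  set P := Finset.univ.filter (fun j => 0 ≤ f j) with hP
  set S := ∑ i, |f i| with hSdef
  have hsplitS : S = (∑ j ∈ P, |f j|) + ∑ j ∈ Finset.univ.filter (fun j => ¬ 0 ≤ f j), |f j| :=
    (Finset.sum_filter_add_sum_filter_not _ _ _).symm
  have hsplit0 : (∑ j ∈ P, f j) + ∑ j ∈ Finset.univ.filter (fun j => ¬ 0 ≤ f j), f j = 0 := by
    rw [Finset.sum_filter_add_sum_filter_not]; exact h0
  have hpos : ∑ j ∈ P, |f j| = ∑ j ∈ P, f j :=
    Finset.sum_congr rfl fun j hj => abs_of_nonneg (Finset.mem_filter.mp hj).2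
  have hneg : ∑ j ∈ Finset.univ.filter (fun j => ¬ 0 ≤ f j), |f j|
      = ∑ j ∈ Finset.univ.filter (fun j => ¬ 0 ≤ f j), (-f j) :=
    Finset.sum_congr rfl fun j hj =>
      abs_of_neg (lt_of_not_ge (Finset.mem_filter.mp hj).2)
  have hS2 : S = 2 * ∑ j ∈ P, f j := by
    rw [hsplitS, hpos, hneg, Finset.sum_neg_distrib]
    linarith [hsplit0]
  have hbound : ∀ i, |f i| ≤ S / 2 := by
    intro i
    by_cases h : 0 ≤ f i
    · have : f i ≤ ∑ j ∈ P, f j :=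
        Finset.single_le_sum (f := f) (fun j hj => (Finset.mem_filter.mp hj).2)
          (Finset.mem_filter.mpr ⟨Finset.mem_univ i, h⟩)
      rw [abs_of_nonneg h]
      linarith [hS2]
    · have : -f i ≤ ∑ j ∈ Finset.univ.filter (fun j => ¬ 0 ≤ f j), (-f j) :=
        Finset.single_le_sum (f := fun j => -f j)
          (fun j hj => le_of_lt (by
            simpa using neg_pos.mpr (lt_of_not_ge (Finset.mem_filter.mp hj).2)))
          (Finset.mem_filter.mpr ⟨Finset.mem_univ i, h⟩)
      have hnegsum : ∑ j ∈ Finset.univ.filter (fun j => ¬ 0 ≤ f j), (-f j) = S / 2 := by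
        rw [Finset.sum_neg_distrib]
        have := hS2
        rw [hsplitS, hpos, hneg, Finset.sum_neg_distrib] at *
        linarith [hsplit0]
      rw [abs_of_neg (lt_of_not_ge h)]
      linarith [this, hnegsum]
  have hSnonneg : 0 ≤ S := Finset.sum_nonneg fun i _ => abs_nonneg _
  have hsum : ∑ i, f i ^ 2 ≤ (S / 2) * S := by
    calc ∑ i, f i ^ 2 = ∑ i, |f i| * |f i| := by
          refine Finset.sum_congr rfl fun i _ => ?_
          rw [← abs_mul, ← sq, abs_of_nonneg (sq_nonneg _)]
      _ ≤ ∑ i, (S / 2) * |f i| :=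
          Finset.sum_le_sum fun i _ =>
            mul_le_mul_of_nonneg_right (hbound i) (abs_nonneg _)
      _ = (S / 2) * S := by rw [← Finset.mul_sum]
  nlinarith [hsum]

lemma aux_hs_ptransp {d k : ℕ} (X : Matrix (Fin d × Fin k) (Fin d × Fin k) ℂ) :
    hsNorm (ptransp X) = hsNorm X := by
  unfold hsNorm
  congr 1
  rw [aux_hs_sq_entrywise, aux_hs_sq_entrywise]
  rw [← Fintype.sum_prod_type (f := fun x : (Fin d × Fin k) × (Fin d × Fin k) =>
    Complex.normSq (ptransp X x.1 x.2))]
  rw [← Fintype.sum_prod_type (f := fun x : (Fin d × Fin k) × (Fin d × Fin k) =>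
    Complex.normSq (X x.1 x.2))]
  let σ : ((Fin d × Fin k) × (Fin d × Fin k)) ≃ ((Fin d × Fin k) × (Fin d × Fin k)) :=
    Function.Involutive.toPerm
      (fun x => ((x.2.1, x.1.2), (x.1.1, x.2.2))) (fun x => rfl)
  exact Equiv.sum_comp σ (fun x => Complex.normSq (X x.1 x.2))

end Aux

theorem ptransp_chain_bound {d k : ℕ} (hk : k ≤ d)
    (Φ : Matrix (Fin d) (Fin d) ℂ →ₗ[ℂ] Matrix (Fin d) (Fin d) ℂ)
    (hherm : ∀ Z, Φ Zᴴ = (Φ Z)ᴴ) (htr : ∀ Z, (Φ Z).trace = 0)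
    (ρ : Matrix (Fin d × Fin k) (Fin d × Fin k) ℂ)
    (hρ : ρ.PosSemidef) (hρ1 : ρ.trace = 1) :
    traceNorm (ptransp (tensorExt (fun X => Φ X) ρ)) ≤
      d * hsNorm (tensorExt (fun X => Φ X) ρ) ∧
    d * hsNorm (tensorExt (fun X => Φ X) ρ) ≤
      (d / Real.sqrt 2) * traceNorm (tensorExt (fun X => Φ X) ρ) := by
  set Y := tensorExt (fun X => Φ X) ρ with hYdef
  -- Y is Hermitian
  have hY : Y.IsHermitian := by
    ext p q
    rw [Matrix.conjTranspose_apply]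
    have hW : (fun a b => ρ (a, q.2) (b, p.2) : Matrix (Fin d) (Fin d) ℂ)ᴴ
        = fun a b => ρ (a, p.2) (b, q.2) := by
      funext a b
      show star (ρ (b, q.2) (a, p.2)) = ρ (a, p.2) (b, q.2)
      have := congr_fun (congr_fun hρ.1 (a, p.2)) (b, q.2)
      simpa [Matrix.conjTranspose_apply] using this
    show star (Φ (fun a b => ρ (a, q.2) (b, p.2)) q.1 p.1)
        = Φ (fun a b => ρ (a, p.2) (b, q.2)) p.1 q.1
    rw [← hW]
    rw [← Matrix.conjTranspose_apply]
    exact (congr_fun (congr_fun (hherm (fun a b => ρ (a, q.2) (b, p.2))) p.1) q.1).symm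
  -- Y has trace zero
  have htrY : Y.trace = 0 := by
    have h1 : Y.trace = ∑ j : Fin k, (Φ (fun a b => ρ (a, j) (b, j))).trace := by
      rw [Matrix.trace]
      rw [Fintype.sum_prod_type (f := fun p : Fin d × Fin k => Y.diag p)]
      rw [Finset.sum_comm]
      rfl
    rw [h1]
    exact Finset.sum_eq_zero fun j _ => htr _
  constructor
  · -- first inequality
    have h1 : traceNorm (ptransp Y) ≤ Real.sqrt (d * k) * hsNorm (ptransp Y) := by
      have := aux_traceNorm_le_sqrt_card (ptransp Y)
      simpa [Fintype.card_prod] using this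
    have h2 : hsNorm (ptransp Y) = hsNorm Y := aux_hs_ptransp Y
    have h3 : Real.sqrt ((d : ℝ) * k) ≤ d := by
      calc Real.sqrt ((d : ℝ) * k) ≤ Real.sqrt ((d : ℝ) * d) := by
            apply Real.sqrt_le_sqrt
            have : (k : ℝ) ≤ d := by exact_mod_cast hk
            nlinarith [Nat.cast_nonneg (α := ℝ) d]
        _ = d := Real.sqrt_mul_self (Nat.cast_nonneg d)
    calc traceNorm (ptransp Y) ≤ Real.sqrt ((d : ℝ) * k) * hsNorm (ptransp Y) := h1
      _ = Real.sqrt ((d : ℝ) * k) * hsNorm Y := by rw [h2]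
      _ ≤ d * hsNorm Y := mul_le_mul_of_nonneg_right h3 (aux_hsNorm_nonneg Y)
  · -- second inequality
    have key : Real.sqrt 2 * hsNorm Y ≤ traceNorm Y := by
      rw [hsNorm, aux_hermitian_hs_sq hY, aux_hermitian_traceNorm hY]
      have h0 : ∑ i, hY.eigenvalues i = 0 := aux_hermitian_sum_eigenvalues_eq_zero hY htrY
      have h2 := aux_sum_sq_le_half hY.eigenvalues h0
      have habs : 0 ≤ ∑ i, |hY.eigenvalues i| := Finset.sum_nonneg fun i _ => abs_nonneg _
      calc Real.sqrt 2 * Real.sqrt (∑ i, hY.eigenvalues i ^ 2)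
          = Real.sqrt (2 * ∑ i, hY.eigenvalues i ^ 2) := by
            rw [Real.sqrt_mul (by norm_num)]
        _ ≤ Real.sqrt ((∑ i, |hY.eigenvalues i|) ^ 2) := Real.sqrt_le_sqrt h2
        _ = ∑ i, |hY.eigenvalues i| := Real.sqrt_sq habs
    have hs2 : (0 : ℝ) < Real.sqrt 2 := by positivity
    have hd : (0 : ℝ) ≤ d := Nat.cast_nonneg d
    calc (d : ℝ) * hsNorm Y = (d / Real.sqrt 2) * (Real.sqrt 2 * hsNorm Y) := by
          field_simp
        _ ≤ (d / Real.sqrt 2) * traceNorm Y :=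
          mul_le_mul_of_nonneg_left key (by positivity)
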